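/- Let M be a monoid and N a submonoid of M. Then N is invariant under all automorphisms of M (i.e., N.map e.toMonoidHom = N for every multiplicative automorphism e : M ≃* M) if and only if there exist a functor F : Core MonCat ⥤ MonCat and a natural transformation ι : F ⟶ Core.inclusion (where Core.inclusion : Core MonCat ⥤ MonCat is the inclusion of the core) such that N equals the range of the underlying monoid homomorphism of the component ι.app M : F.obj M ⟶ M. -/

import Mathlib

open CategoryTheory

theorem submonoid_characteristic_iff_counital (M : MonCat) (N : Submonoid M) :
    (∀ e : M ≃* M, N.map e.toMonoidHom = N) ↔
      ∃ (F : Core MonCat ⥤ MonCat) (ι : F ⟶ Core.inclusion MonCat),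
        N = MonoidHom.mrange (ι.app (Core.mk M : Core MonCat)).hom := by
  constructor
  · intro h
    -- the "orbit" submonoid of any object
    set S : ∀ X : MonCat, Submonoid X := fun X => ⨆ e : (M : Type _) ≃* X, N.map e.toMonoidHom
      with hS
    have key : ∀ (X Y : MonCat) (f : (X : Type _) →* Y), Function.Bijective f →
        (S X).map f ≤ S Y := by
      intro X Y f hf
      rw [hS]
      rw [Submonoid.map_iSup]
      refine iSup_le fun e => ?_
      rw [Submonoid.map_map]
      have he : f.comp e.toMonoidHom = (e.trans (MulEquiv.ofBijective f hf)).toMonoidHom := by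
        ext x; rfl
      rw [he]
      exact le_iSup (fun e : (M : Type _) ≃* Y => N.map e.toMonoidHom)
        (e.trans (MulEquiv.ofBijective f hf))
    have hSM : S M = N := by
      rw [hS]
      simp only [h]
      exact iSup_const (ι := (M : Type _) ≃* M)
    have hbij : ∀ {X Y : MonCat} (f : X ≅ Y),
        Function.Bijective (show ↥(show MonCat from X) →* ↥(show MonCat from Y) from f.hom.hom) :=
      fun f => f.monCatIsoToMulEquiv.bijective
    refine ⟨{
        obj := fun X => MonCat.of (S X.of)
        map := fun {X Y} f => MonCat.ofHom
          ((Submonoid.inclusion (key X.of Y.of f.iso.hom.hom (hbij f.iso))).comp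
            ((show ↥(show MonCat from X.of) →* ↥(show MonCat from Y.of) from f.iso.hom.hom).submonoidMap (S X.of)))
        map_id := fun X => by ext x; rfl
        map_comp := fun f g => by ext x; rfl },
      { app := fun X => MonCat.ofHom (S X.of).subtype
        naturality := fun X Y f => by ext x; rfl }, ?_⟩
    exact hSM ▸ (Submonoid.mrange_subtype (S M)).symm
  · rintro ⟨F, ι, hN⟩
    have hle : ∀ e : M ≃* M, N.map e.toMonoidHom ≤ N := by
      intro e
      -- the automorphism as a morphism in the core
      let f : (Core.mk M : Core MonCat) ⟶ (Core.mk M : Core MonCat) :=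
        ⟨MonCat.ofHom e.toMonoidHom, MonCat.ofHom e.symm.toMonoidHom,
          by ext x; exact e.symm_apply_apply x, by ext x; exact e.apply_symm_apply x⟩
      have hnat := ι.naturality f
      rw [hN]
      erw [MonoidHom.map_mrange]
      have hc : (MonoidHom.comp e.toMonoidHom (ι.app (Core.mk M : Core MonCat)).hom) =
          MonoidHom.comp (ι.app (Core.mk M : Core MonCat)).hom (F.map f).hom :=
        congrArg MonCat.Hom.hom hnat.symm
      rw [hc]
      rintro x ⟨y, rfl⟩
      exact ⟨F.map f y, rfl⟩
    intro e
    refine le_antisymm (hle e) ?_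
    have hm := (Submonoid.gc_map_comap e.toMonoidHom).monotone_l (hle e.symm)
    rw [Submonoid.map_map] at hm
    have hid : e.toMonoidHom.comp e.symm.toMonoidHom = MonoidHom.id M := by
      ext x; exact e.apply_symm_apply x
    rwa [hid, Submonoid.map_id] at hm
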